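/- Let λ > 0, t_C ≥ 0, E_C ≥ 0, σ > 0 and let w₁, w₂, s₁, s₂ be positive reals with w₁ < w₂. Define w = (w₁ + w₂)/2, s_A = (w₁ + w₂)/(w₁/s₁ + w₂/s₂), s_B = (w₁ + w₂)²/(2·(w₁²/s₁ + w₂²/s₂)), and s = max(s_A, s_B). For a chunk of size ω executed at speed v and re-executed at speed σ let T(ω, v) = (ω/v + t_C) + λ·(ω/v + t_C)·(ω/σ + t_C) and E(ω, v) = (ω·v² + E_C) + λ·(ω/v + t_C)·(ω·σ² + E_C). Then 2·T(w, s) ≤ T(w₁, s₁) + T(w₂, s₂) and 2·E(w, s) < E(w₁, s₁) + E(w₂, s₂). -/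

import Mathlib

-- Step lemma for the Hölder-type bound
lemma holder_poly (w1 w2 s1 s2 : ℝ) (hw1 : 0 < w1) (hw2 : 0 < w2) (hs1 : 0 < s1)
    (hs2 : 0 < s2) (hne : w1 ≠ w2) :
    (w1+w2)^5*(s1*s2)^2 < 4*(w1^2*s2+w2^2*s1)^2*(w1*s1^2+w2*s2^2) := by
  obtain ⟨t1, ht1, ht1p⟩ : ∃ t : ℝ, t^2 = w1 ∧ 0 < t :=
    ⟨Real.sqrt w1, Real.sq_sqrt hw1.le, Real.sqrt_pos.2 hw1⟩
  obtain ⟨t2, ht2, ht2p⟩ : ∃ t : ℝ, t^2 = w2 ∧ 0 < t :=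
    ⟨Real.sqrt w2, Real.sq_sqrt hw2.le, Real.sqrt_pos.2 hw2⟩
  subst ht1 ht2
  have htne : t1 ≠ t2 := fun h => hne (by rw [h])
  have hQ : 0 < t1^4+2*t1^3*t2+2*t1*t2^3+t2^4 := by positivity
  have hP : 0 < (t1-t2)^2 := by
    have : t1 - t2 ≠ 0 := sub_ne_zero.2 htne
    positivity
  have h3 : (t1^2+t2^2)^3 < 2*(t1^3+t2^3)^2 := by nlinarith [mul_pos hP hQ]
  have hG : 0 < t1^3+t2^3 := by positivity
  have hWp : 0 < t1^2+t2^2 := by positivity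
  have h3sq : (t1^2+t2^2)^6 < 4*(t1^3+t2^3)^4 := by nlinarith [h3, pow_pos hWp 3, hG, sq_nonneg (t1^3+t2^3)]
  have h1 : (t1^3+t2^3)^2*(s1*s2) ≤ (t1^4*s2+t2^4*s1)*(t1^2*s1+t2^2*s2) := by
    nlinarith [mul_nonneg (mul_nonneg (sq_nonneg t1) (sq_nonneg t2)) (sq_nonneg (t1*s2-t2*s1))]
  have h2 : (t1^2*s1+t2^2*s2)^2 ≤ (t1^2+t2^2)*(t1^2*s1^2+t2^2*s2^2) := by
    nlinarith [mul_nonneg (mul_nonneg (sq_nonneg t1) (sq_nonneg t2)) (sq_nonneg (s1-s2))]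
  have hGs : 0 ≤ (t1^3+t2^3)^2*(s1*s2) := by positivity
  have h1sq : ((t1^3+t2^3)^2*(s1*s2))^2 ≤ ((t1^4*s2+t2^4*s1)*(t1^2*s1+t2^2*s2))^2 :=
    pow_le_pow_left₀ hGs h1 2
  have h4 : (t1^3+t2^3)^4*(s1*s2)^2 ≤ (t1^4*s2+t2^4*s1)^2*((t1^2+t2^2)*(t1^2*s1^2+t2^2*s2^2)) := by
    nlinarith [h1sq, mul_le_mul_of_nonneg_left h2 (sq_nonneg (t1^4*s2+t2^4*s1))]
  have h5 : (t1^2+t2^2)^6*(s1*s2)^2 < 4*((t1^3+t2^3)^4*(s1*s2)^2) := by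
    have := mul_lt_mul_of_pos_right h3sq (by positivity : (0:ℝ) < (s1*s2)^2)
    linarith
  have h6 : (t1^2+t2^2) * ((t1^2+t2^2)^5*(s1*s2)^2) <
      (t1^2+t2^2) * (4*((t1^2)^2*s2+(t2^2)^2*s1)^2*(t1^2*s1^2+t2^2*s2^2)) := by
    nlinarith [h5, h4]
  exact lt_of_mul_lt_mul_left h6 hWp.le

-- Cauchy-type bound for s_A
lemma cauchy_poly (w1 w2 s1 s2 : ℝ) (hw1 : 0 < w1) (hw2 : 0 < w2) (hs1 : 0 < s1)
    (hs2 : 0 < s2) :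
    (w1+w2)^3*(s1*s2)^2 ≤ (w1*s2+w2*s1)^2*(w1*s1^2+w2*s2^2) := by
  nlinarith [mul_nonneg (mul_nonneg (sq_nonneg (s1-s2)) (mul_pos (mul_pos hw1 hw1) hw2).le)
      (mul_nonneg hs2.le (by linarith : (0:ℝ) ≤ 2*s1+s2)),
    mul_nonneg (mul_nonneg (sq_nonneg (s1-s2)) (mul_pos (mul_pos hw1 hw2) hw2).le)
      (mul_nonneg hs1.le (by linarith : (0:ℝ) ≤ s1+2*s2))]

lemma cauchyA (w1 w2 s1 s2 : ℝ) (hw1 : 0 < w1) (hw2 : 0 < w2) (hs1 : 0 < s1) (hs2 : 0 < s2) :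
    (w1+w2) * ((w1+w2)/(w1/s1+w2/s2))^2 ≤ w1*s1^2+w2*s2^2 := by
  have ha : 0 < w1/s1+w2/s2 := by positivity
  have h2 : (w1/s1+w2/s2) = (w1*s2+w2*s1)/(s1*s2) := by field_simp; try ring
  have key : (w1+w2)^3 ≤ (w1/s1+w2/s2)^2*(w1*s1^2+w2*s2^2) := by
    rw [h2, div_pow, div_mul_eq_mul_div, le_div_iff₀ (by positivity)]
    nlinarith [cauchy_poly w1 w2 s1 s2 hw1 hw2 hs1 hs2]
  have e : (w1+w2) * ((w1+w2)/(w1/s1+w2/s2))^2 = (w1+w2)^3/(w1/s1+w2/s2)^2 := by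
    field_simp; try ring
  rw [e, div_le_iff₀ (by positivity)]
  nlinarith [key]

lemma holderB (w1 w2 s1 s2 : ℝ) (hw1 : 0 < w1) (hw2 : 0 < w2) (hs1 : 0 < s1) (hs2 : 0 < s2)
    (hne : w1 ≠ w2) :
    (w1+w2) * ((w1+w2)^2/(2*(w1^2/s1+w2^2/s2)))^2 < w1*s1^2+w2*s2^2 := by
  have hb : 0 < w1^2/s1+w2^2/s2 := by positivity
  have h2 : (w1^2/s1+w2^2/s2) = (w1^2*s2+w2^2*s1)/(s1*s2) := by field_simp; try ring
  have key : (w1+w2)^5 < 4*(w1^2/s1+w2^2/s2)^2*(w1*s1^2+w2*s2^2) := by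
    rw [h2, div_pow,
      show (4:ℝ)*((w1^2*s2+w2^2*s1)^2/(s1*s2)^2)*(w1*s1^2+w2*s2^2)
        = 4*(w1^2*s2+w2^2*s1)^2*(w1*s1^2+w2*s2^2)/(s1*s2)^2 from by ring,
      lt_div_iff₀ (by positivity)]
    nlinarith [holder_poly w1 w2 s1 s2 hw1 hw2 hs1 hs2 hne]
  have e : (w1+w2) * ((w1+w2)^2/(2*(w1^2/s1+w2^2/s2)))^2
      = (w1+w2)^5/(4*(w1^2/s1+w2^2/s2)^2) := by
    field_simp; try ring
  rw [e, div_lt_iff₀ (by positivity)]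
  nlinarith [key]

-- exchange key lemmas
lemma exch_key (w1 w2 x1 x2 u c d : ℝ) (hw1 : 0 < w1) (hw2 : 0 < w2) (hlt : w1 ≤ w2)
    (hc : 0 ≤ c) (hd : 0 ≤ d) (hu : 0 ≤ u)
    (h1 : 2*u ≤ x1+x2) (h2 : (w1+w2)*u ≤ w1*x1+w2*x2) :
    u*((c*w1+d)+(c*w2+d)) ≤ x1*(c*w1+d)+x2*(c*w2+d) := by
  have hy : (0:ℝ) ≤ (c*w1+d)+(c*w2+d) := by positivity
  rcases le_total x1 x2 with h|h
  · nlinarith [mul_nonneg (sub_nonneg.2 h) (mul_nonneg hc (sub_nonneg.2 hlt)),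
      mul_le_mul_of_nonneg_right h1 hy]
  · nlinarith [mul_nonneg (sub_nonneg.2 h) (mul_nonneg hd (sub_nonneg.2 hlt)),
      mul_le_mul_of_nonneg_right h2 hy, mul_pos hw1 hw2, add_pos hw1 hw2]

lemma exch_key_strict (w1 w2 x1 x2 u c d : ℝ) (hw1 : 0 < w1) (hw2 : 0 < w2) (hlt : w1 < w2)
    (hc : 0 < c) (hd : 0 ≤ d) (hu : 0 ≤ u)
    (h1 : 2*u ≤ x1+x2) (hx : x1 < x2) :
    u*((c*w1+d)+(c*w2+d)) < x1*(c*w1+d)+x2*(c*w2+d) := by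
  have hy : (0:ℝ) ≤ (c*w1+d)+(c*w2+d) := by positivity
  nlinarith [mul_pos (sub_pos.2 hx) (mul_pos hc (sub_pos.2 hlt)),
    mul_le_mul_of_nonneg_right h1 hy]

/-- Exchange argument for the multiple-speeds model. With a common
re-execution speed `σ`, `T(ω, v) = (ω/v + t_C) + λ (ω/v + t_C)(ω/σ + t_C)` and
`E(ω, v) = (ω v² + E_C) + λ (ω/v + t_C)(ω σ² + E_C)`, replacing two chunks of
different sizes `w₁ < w₂` executed at speeds `s₁, s₂` by two equal chunks of size
`w = (w₁+w₂)/2` at speed `s = max(s_A, s_B)` does not increase the expected time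
and strictly decreases the expected energy. -/
theorem stmt_14 (lam tC EC σ w1 w2 s1 s2 : ℝ) (hlam : 0 < lam) (htC : 0 ≤ tC)
    (hEC : 0 ≤ EC) (hσ : 0 < σ) (hw1 : 0 < w1) (hw2 : 0 < w2)
    (hs1 : 0 < s1) (hs2 : 0 < s2) (hlt : w1 < w2)
    (w sA sB s : ℝ) (hw : w = (w1 + w2) / 2)
    (hsA : sA = (w1 + w2) / (w1 / s1 + w2 / s2))
    (hsB : sB = (w1 + w2) ^ 2 / (2 * (w1 ^ 2 / s1 + w2 ^ 2 / s2)))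
    (hsmax : s = max sA sB)
    (T E : ℝ → ℝ → ℝ)
    (hT : ∀ ω v : ℝ, T ω v = (ω / v + tC) + lam * (ω / v + tC) * (ω / σ + tC))
    (hE : ∀ ω v : ℝ, E ω v = (ω * v ^ 2 + EC) + lam * (ω / v + tC) * (ω * σ ^ 2 + EC)) :
    2 * T w s ≤ T w1 s1 + T w2 s2 ∧ 2 * E w s < E w1 s1 + E w2 s2 := by
  have hW : (0:ℝ) < w1 + w2 := by linarith
  have ha0 : (0:ℝ) < w1/s1 + w2/s2 := by positivity
  have hb0 : (0:ℝ) < w1^2/s1 + w2^2/s2 := by positivity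
  have hsA0 : 0 < sA := by rw [hsA]; positivity
  have hsB0 : 0 < sB := by rw [hsB]; positivity
  have hsAle : sA ≤ s := hsmax ▸ le_max_left _ _
  have hsBle : sB ≤ s := hsmax ▸ le_max_right _ _
  have hs0 : 0 < s := lt_of_lt_of_le hsA0 hsAle
  have hw0 : 0 < w := by rw [hw]; positivity
  -- bound 1 : w/s ≤ a/2
  have hdiv1 : w/s ≤ (w1/s1 + w2/s2)/2 := by
    have h1 : w/s ≤ w/sA := by gcongr
    have h2 : w/sA = (w1/s1 + w2/s2)/2 := by
      rw [hw, hsA]; field_simp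
    linarith
  -- bound 2 : w/s ≤ b/(w1+w2)
  have hdiv2 : w/s ≤ (w1^2/s1 + w2^2/s2)/(w1+w2) := by
    have h1 : w/s ≤ w/sB := by gcongr
    have h2 : w/sB = (w1^2/s1 + w2^2/s2)/(w1+w2) := by
      rw [hw, hsB]; field_simp
    linarith
  set u : ℝ := w/s + tC with hudef
  have hu0 : 0 ≤ u := by positivity
  have hu1 : 2*u ≤ (w1/s1+tC) + (w2/s2+tC) := by rw [hudef]; linarith
  have hu2 : (w1+w2)*u ≤ w1*(w1/s1+tC) + w2*(w2/s2+tC) := by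
    have e : w1*(w1/s1+tC) + w2*(w2/s2+tC) = (w1^2/s1+w2^2/s2) + (w1+w2)*tC := by ring
    have e2 : (w1+w2)*u ≤ (w1+w2)*((w1^2/s1 + w2^2/s2)/(w1+w2) + tC) := by
      rw [hudef]; gcongr
    have e3 : (w1+w2)*((w1^2/s1 + w2^2/s2)/(w1+w2) + tC)
        = (w1^2/s1+w2^2/s2) + (w1+w2)*tC := by field_simp
    linarith
  -- Time part
  have hKT : u*(((1/σ)*w1+tC)+((1/σ)*w2+tC)) ≤
      (w1/s1+tC)*((1/σ)*w1+tC)+(w2/s2+tC)*((1/σ)*w2+tC) :=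
    exch_key w1 w2 (w1/s1+tC) (w2/s2+tC) u (1/σ) tC hw1 hw2 hlt.le
      (by positivity) htC hu0 hu1 hu2
  have htime : 2 * T w s ≤ T w1 s1 + T w2 s2 := by
    have eL : 2 * T w s = 2*u + lam*(u*(((1/σ)*w1+tC)+((1/σ)*w2+tC))) := by
      rw [hT, hudef, hw]; ring
    have eR : T w1 s1 + T w2 s2 = ((w1/s1+tC) + (w2/s2+tC))
        + lam*((w1/s1+tC)*((1/σ)*w1+tC)+(w2/s2+tC)*((1/σ)*w2+tC)) := by
      rw [hT, hT]; ring
    rw [eL, eR]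
    have := mul_le_mul_of_nonneg_left hKT hlam.le
    linarith
  refine ⟨htime, ?_⟩
  -- Energy part
  have eL : 2 * E w s = (w1+w2)*s^2 + 2*EC + lam*(u*((σ^2*w1+EC)+(σ^2*w2+EC))) := by
    rw [hE, hudef, hw]; ring
  have eR : E w1 s1 + E w2 s2 = (w1*s1^2+w2*s2^2) + 2*EC
      + lam*((w1/s1+tC)*(σ^2*w1+EC)+(w2/s2+tC)*(σ^2*w2+EC)) := by
    rw [hE, hE]; ring
  rw [eL, eR]
  rcases lt_or_ge (w1/s1) (w2/s2) with hx | hx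
  · -- strict in the lambda term, s = sA
    have hord : sB ≤ sA := by
      rw [hsA, hsB, div_le_div_iff₀ (by positivity) (by positivity)]
      have hid : (w1+w2) * (2*(w1^2/s1+w2^2/s2)) - (w1+w2)^2 * (w1/s1+w2/s2)
          = (w1+w2)*((w2-w1)*(w2/s2-w1/s1)) := by ring
      linarith [mul_pos hW (mul_pos (sub_pos.2 hlt) (sub_pos.2 hx)), hid]
    have hseq : s = sA := by rw [hsmax, max_eq_left hord]
    have hsq : (w1+w2)*s^2 ≤ w1*s1^2+w2*s2^2 := by
      rw [hseq, hsA]; exact cauchyA w1 w2 s1 s2 hw1 hw2 hs1 hs2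
    have hKE : u*((σ^2*w1+EC)+(σ^2*w2+EC)) <
        (w1/s1+tC)*(σ^2*w1+EC)+(w2/s2+tC)*(σ^2*w2+EC) :=
      exch_key_strict w1 w2 (w1/s1+tC) (w2/s2+tC) u (σ^2) EC hw1 hw2 hlt
        (by positivity) hEC hu0 hu1 (by linarith)
    have := mul_lt_mul_of_pos_left hKE hlam
    linarith
  · -- strict in the s^2 term, s = sB
    have hord : sA ≤ sB := by
      rw [hsA, hsB, div_le_div_iff₀ (by positivity) (by positivity)]
      have hid : (w1+w2)^2 * (w1/s1+w2/s2) - (w1+w2) * (2*(w1^2/s1+w2^2/s2))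
          = (w1+w2)*((w2-w1)*(w1/s1-w2/s2)) := by ring
      linarith [mul_nonneg hW.le (mul_nonneg (sub_pos.2 hlt).le (sub_nonneg.2 hx)), hid]
    have hseq : s = sB := by rw [hsmax, max_eq_right hord]
    have hsq : (w1+w2)*s^2 < w1*s1^2+w2*s2^2 := by
      rw [hseq, hsB]; exact holderB w1 w2 s1 s2 hw1 hw2 hs1 hs2 hlt.ne
    have hKE : u*((σ^2*w1+EC)+(σ^2*w2+EC)) ≤
        (w1/s1+tC)*(σ^2*w1+EC)+(w2/s2+tC)*(σ^2*w2+EC) :=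
      exch_key w1 w2 (w1/s1+tC) (w2/s2+tC) u (σ^2) EC hw1 hw2 hlt.le
        (by positivity) hEC hu0 hu1 hu2
    have := mul_le_mul_of_nonneg_left hKE hlam.le
    linarith
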